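/- arXiv:2012.12735 — 2 statements merged into one kernel-verified Lean document; each statement's English description precedes it below -/
import Mathlib

section
/- Let ψ be a Gaussian coherent state ψ(x) = (2πħ)^(−1/4) σ^(−1/2) exp(−(σ̆/(4ħσ))(x−q)² + i(p/ħ)(x−q)) with Re σ > 0, Re σ̆ > 0, Re(σ̄σ̆) = 1, and q ≠ 0. Then ‖ψ(−sgn(q)|·|)‖_{L²(ℝ)} ≤ e^{−q²/(4ħ|σ|²)}. -/
open MeasureTheory
open scoped ENNReal NNReal

/-- The Gaussian coherent state `ψ^ħ(σ, σ̆, q, p; x)`. -/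
noncomputable def cohSt (hbar : ℝ) (s sb : ℂ) (q p : ℝ) (x : ℝ) : ℂ :=
  (((2 * Real.pi * hbar) ^ ((1 : ℝ) / 4) : ℝ) : ℂ)⁻¹ * (s ^ ((1 : ℂ) / 2))⁻¹ *
    Complex.exp (-(sb / (4 * (hbar : ℂ) * s)) * ((x : ℂ) - (q : ℂ)) ^ 2
      + Complex.I * ((p : ℂ) / (hbar : ℂ)) * ((x : ℂ) - (q : ℂ)))

lemma abs_cohSt (hbar : ℝ) (hh : 0 < hbar) (s sb : ℂ) (hs : 0 < s.re)
    (hnorm : ((starRingEnd ℂ) s * sb).re = 1) (q p : ℝ) (y : ℝ) :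
    ‖cohSt hbar s sb q p y‖ =
      (((2 * Real.pi * hbar) ^ ((1:ℝ)/4))⁻¹ * (‖s‖ ^ ((1:ℝ)/2))⁻¹) *
        Real.exp (-(y - q)^2 / (4 * hbar * ‖s‖ ^ 2)) := by
  have hs0 : s ≠ 0 := by
    intro h; rw [h] at hs; simp at hs
  have hr : (0:ℝ) < (2 * Real.pi * hbar) ^ ((1:ℝ)/4) := by
    apply Real.rpow_pos_of_pos; positivity
  have habs : (0:ℝ) < ‖s‖ := norm_pos_iff.mpr hs0
  have hnsq : Complex.normSq s ≠ 0 := by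
    simpa [Complex.normSq_eq_norm_sq] using (pow_ne_zero 2 habs.ne')
  have hdiv : (sb / (4 * (hbar : ℂ) * s)).re = 1 / (4 * hbar * ‖s‖ ^ 2) := by
    have heq : sb / (4 * (hbar : ℂ) * s) = ((1 / (4 * hbar) : ℝ) : ℂ) * (sb / s) := by
      push_cast; field_simp
    rw [heq, Complex.re_ofReal_mul]
    have h2 : (sb / s).re = 1 / Complex.normSq s := by
      rw [Complex.div_re, ← add_div]
      have h3 : sb.re * s.re + sb.im * s.im = 1 := by
        have := hnorm
        simp [Complex.mul_re] at this
        linarith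
      rw [h3]
    rw [h2, Complex.sq_norm]
    field_simp
  have hre : (-(sb / (4 * (hbar : ℂ) * s)) * ((y : ℂ) - (q : ℂ)) ^ 2
      + Complex.I * ((p : ℂ) / (hbar : ℂ)) * ((y : ℂ) - (q : ℂ))).re
      = -(y - q)^2 / (4 * hbar * ‖s‖ ^ 2) := by
    have hform : -(sb / (4 * (hbar : ℂ) * s)) * ((y : ℂ) - (q : ℂ)) ^ 2
        + Complex.I * ((p : ℂ) / (hbar : ℂ)) * ((y : ℂ) - (q : ℂ))
        = -((((y - q)^2 : ℝ) : ℂ) * (sb / (4 * (hbar : ℂ) * s)))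
          + (((p / hbar * (y - q) : ℝ)) : ℂ) * Complex.I := by
      push_cast; ring
    rw [hform]
    simp only [Complex.add_re, Complex.neg_re, Complex.re_ofReal_mul, Complex.mul_re,
      Complex.ofReal_re, Complex.ofReal_im, Complex.I_re, Complex.I_im, hdiv]
    ring
  unfold cohSt
  rw [norm_mul, norm_mul, norm_inv, norm_inv, Complex.norm_exp, hre,
    Complex.norm_real, Real.norm_eq_abs, abs_of_pos hr, Complex.norm_cpow_of_ne_zero hs0]
  norm_num

lemma gauss_eLpNorm (c b : ℝ) (hc : 0 ≤ c) (hb : 0 < b) :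
    eLpNorm (fun x : ℝ => c * Real.exp (-b * x ^ 2)) 2 volume
      = ENNReal.ofReal (c * (Real.pi / (2 * b)) ^ ((1:ℝ)/4)) := by
  rw [eLpNorm_eq_lintegral_rpow_enorm_toReal two_ne_zero ENNReal.ofNat_ne_top]
  have htr : ((2 : ℝ≥0∞)).toReal = (2:ℝ) := by norm_num
  rw [htr]
  have hpt : ∀ x : ℝ, (‖c * Real.exp (-b * x ^ 2)‖ₑ) ^ (2:ℝ)
      = ENNReal.ofReal (c ^ 2 * Real.exp (-(2*b) * x ^ 2)) := by
    intro x
    have h0 : (0:ℝ) ≤ c * Real.exp (-b * x ^ 2) := by positivity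
    rw [Real.enorm_eq_ofReal h0, ENNReal.ofReal_rpow_of_nonneg h0 (by norm_num)]
    congr 1
    rw [Real.rpow_two]
    rw [mul_pow, ← Real.exp_nat_mul]
    ring_nf
  simp_rw [hpt]
  have hint : Integrable (fun x : ℝ => c ^ 2 * Real.exp (-(2*b) * x ^ 2)) volume :=
    (integrable_exp_neg_mul_sq (by linarith)).const_mul _
  rw [← ofReal_integral_eq_lintegral_ofReal hint
      (Filter.Eventually.of_forall fun x => by positivity)]
  rw [MeasureTheory.integral_const_mul, integral_gaussian]
  rw [ENNReal.ofReal_rpow_of_nonneg (by positivity) (by norm_num)]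
  congr 1
  rw [Real.mul_rpow (by positivity) (Real.sqrt_nonneg _)]
  congr 1
  · rw [← Real.rpow_natCast c 2, ← Real.rpow_mul hc]
    norm_num
  · rw [Real.sqrt_eq_rpow, ← Real.rpow_mul (by positivity)]
    norm_num

theorem stmt8 (hbar : ℝ) (hh : 0 < hbar) (s sb : ℂ) (hs : 0 < s.re) (hsb : 0 < sb.re)
    (hnorm : ((starRingEnd ℂ) s * sb).re = 1) (q p : ℝ) (hq : q ≠ 0) :
    eLpNorm (fun x : ℝ => cohSt hbar s sb q p (-(Real.sign q) * |x|)) 2 volume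
      ≤ ENNReal.ofReal (Real.exp (-(q ^ 2) / (4 * hbar * ‖s‖ ^ 2))) := by
  have hs0 : s ≠ 0 := by intro h; rw [h] at hs; simp at hs
  have habs : (0:ℝ) < ‖s‖ := norm_pos_iff.mpr hs0
  set D : ℝ := 4 * hbar * ‖s‖ ^ 2 with hD
  have hD0 : 0 < D := by positivity
  set A : ℝ := ((2 * Real.pi * hbar) ^ ((1:ℝ)/4))⁻¹ * (‖s‖ ^ ((1:ℝ)/2))⁻¹ with hA
  have hr1 : (0:ℝ) < (2 * Real.pi * hbar) ^ ((1:ℝ)/4) :=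
    Real.rpow_pos_of_pos (by positivity) _
  have hr2 : (0:ℝ) < ‖s‖ ^ ((1:ℝ)/2) := Real.rpow_pos_of_pos habs _
  have hA0 : 0 < A := mul_pos (inv_pos.mpr hr1) (inv_pos.mpr hr2)
  set K : ℝ := Real.exp (-(q ^ 2) / D) with hK
  have hK0 : 0 < K := Real.exp_pos _
  have hbound : ∀ x : ℝ, ‖cohSt hbar s sb q p (-(Real.sign q) * |x|)‖
      ≤ ‖A * K * Real.exp (-(1/D) * x ^ 2)‖ := by
    intro x
    have hsgq : Real.sign q * q = |q| := by
      rcases hq.lt_or_gt with h | h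
      · rw [Real.sign_of_neg h, abs_of_neg h]; ring
      · rw [Real.sign_of_pos h, abs_of_pos h]; ring
    have hsg2 : Real.sign q ^ 2 = 1 := by
      rcases hq.lt_or_gt with h | h
      · rw [Real.sign_of_neg h]; norm_num
      · rw [Real.sign_of_pos h]; norm_num
    have hgeq : x ^ 2 + q ^ 2 ≤ (-(Real.sign q) * |x| - q) ^ 2 := by
      have hexp : (-(Real.sign q) * |x| - q) ^ 2
          = Real.sign q ^ 2 * |x| ^ 2 + 2 * |x| * (Real.sign q * q) + q ^ 2 := by ring
      rw [hexp, hsg2, hsgq, one_mul, sq_abs]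
      nlinarith [abs_nonneg x, abs_nonneg q]
    rw [abs_cohSt hbar hh s sb hs hnorm q p _, ← hD, ← hA,
      Real.norm_eq_abs,
      abs_of_nonneg (mul_nonneg (mul_nonneg hA0.le hK0.le) (Real.exp_nonneg _))]
    have hexp_le : Real.exp (-(-(Real.sign q) * |x| - q)^2 / D)
        ≤ K * Real.exp (-(1/D) * x ^ 2) := by
      rw [hK, ← Real.exp_add]
      apply Real.exp_le_exp.mpr
      have h1 : -(q ^ 2) / D + -(1/D) * x ^ 2 = -(x ^ 2 + q ^ 2) / D := by
        field_simp; ring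
      rw [h1, neg_div, neg_div, neg_le_neg_iff]
      gcongr
    calc A * Real.exp (-(-(Real.sign q) * |x| - q) ^ 2 / D)
        ≤ A * (K * Real.exp (-(1/D) * x ^ 2)) :=
          mul_le_mul_of_nonneg_left hexp_le hA0.le
      _ = A * K * Real.exp (-(1/D) * x ^ 2) := by ring
  calc eLpNorm (fun x : ℝ => cohSt hbar s sb q p (-(Real.sign q) * |x|)) 2 volume
      ≤ eLpNorm (fun x : ℝ => A * K * Real.exp (-(1/D) * x ^ 2)) 2 volume :=
        eLpNorm_mono hbound
    _ = ENNReal.ofReal (A * K * (Real.pi / (2 * (1/D))) ^ ((1:ℝ)/4)) :=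
        gauss_eLpNorm _ _ (by positivity) (by positivity)
    _ = ENNReal.ofReal K := by
        congr 1
        have h1 : Real.pi / (2 * (1/D)) = (2 * Real.pi * hbar) * ‖s‖ ^ 2 := by
          rw [hD]; field_simp; ring
        rw [h1, Real.mul_rpow (by positivity) (by positivity)]
        have h2 : (‖s‖ ^ 2 : ℝ) ^ ((1:ℝ)/4) = ‖s‖ ^ ((1:ℝ)/2) := by
          rw [← Real.rpow_natCast ‖s‖ 2, ← Real.rpow_mul habs.le]
          norm_num
        rw [h2, hA]
        field_simp
end

section
/- Let ψ(x) = (2πħ)^(−1/4) σ^(−1/2) exp(−(σ̆/(4ħσ))(x−q)² + i(p/ħ)(x−q)) with Re σ > 0, Re σ̆ > 0, Re(σ̄σ̆) = 1, q ≠ 0. Then ‖sgn(·)·ψ(sgn(q)|·|) − sgn(q)·(ψ(·) − ψ(−·))‖_{L²(ℝ)} ≤ e^{−q²/(4ħ|σ|²)}. -/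
open MeasureTheory
open scoped ENNReal

theorem stmt9 (hbar : ℝ) (hh : 0 < hbar) (s sb : ℂ) (hs : 0 < s.re) (hsb : 0 < sb.re)
    (hnorm : ((starRingEnd ℂ) s * sb).re = 1) (q p : ℝ) (hq : q ≠ 0) :
    eLpNorm
      (fun x : ℝ =>
        (Real.sign x : ℂ) * cohSt hbar s sb q p (Real.sign q * |x|)
          - (Real.sign q : ℂ) * (cohSt hbar s sb q p x - cohSt hbar s sb q p (-x)))
      2 volume
      ≤ ENNReal.ofReal (Real.exp (-(q ^ 2) / (4 * hbar * ‖s‖ ^ 2))) := by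
  have hs0 : s ≠ 0 := fun h => by simp [h] at hs
  have habs : 0 < ‖s‖ := norm_pos_iff.mpr hs0
  set A : ℝ := 4 * hbar * ‖s‖ ^ 2 with hA
  have hApos : 0 < A := by positivity
  set c1 : ℝ := ((2 * Real.pi * hbar) ^ ((1:ℝ)/4))⁻¹ * (‖s‖ ^ ((1:ℝ)/2))⁻¹ with hc1
  have h2ph : 0 < 2 * Real.pi * hbar := by positivity
  have hc1pos : 0 < c1 := by
    apply mul_pos <;> rw [inv_pos] <;> positivity
  -- norm of the coherent state
  have hnormψ : ∀ y : ℝ, ‖cohSt hbar s sb q p y‖ = c1 * Real.exp (-(y - q)^2 / A) := by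
    intro y
    have h1 : s.re * sb.re + s.im * sb.im = 1 := by
      simpa [Complex.mul_re] using hnorm
    have hns : Complex.normSq s ≠ 0 := by
      simpa [Complex.normSq_pos] using hs0
    have e2 : (Complex.I * ((p:ℂ)/(hbar:ℂ))).re = 0 := by
      simp [Complex.mul_re, Complex.div_re, Complex.div_im]
    have e1 : (-(sb / (4 * (hbar:ℂ) * s))).re = -(1 / (4 * hbar * Complex.normSq s)) := by
      rw [Complex.neg_re, neg_inj, Complex.div_re]
      have h4 : (4 * (hbar:ℂ) * s).re = 4 * hbar * s.re := by simp [Complex.mul_re]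
      have h4' : (4 * (hbar:ℂ) * s).im = 4 * hbar * s.im := by simp [Complex.mul_im]
      have hn4 : Complex.normSq (4 * (hbar:ℂ) * s) = (4*hbar)^2 * Complex.normSq s := by
        simp only [Complex.normSq_apply, h4, h4']; ring
      rw [h4, h4', hn4, ← add_div,
        show sb.re * (4*hbar*s.re) + sb.im * (4*hbar*s.im)
          = 4*hbar*(s.re*sb.re + s.im*sb.im) by ring, h1]
      have h4h : (4:ℝ)*hbar ≠ 0 := by positivity
      field_simp
    have key : -(sb / (4 * (hbar:ℂ) * s)) * ((y:ℂ) - q)^2 + Complex.I * ((p:ℂ)/(hbar:ℂ)) * ((y:ℂ) - q)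
        = ((((y-q)^2 : ℝ)):ℂ) * (-(sb / (4 * (hbar:ℂ) * s))) + (((y-q : ℝ)):ℂ) * (Complex.I * ((p:ℂ)/(hbar:ℂ))) := by
      push_cast; ring
    have hre : (-(sb / (4 * (hbar:ℂ) * s)) * ((y:ℂ) - q)^2
        + Complex.I * ((p:ℂ)/(hbar:ℂ)) * ((y:ℂ) - q)).re = -(y - q)^2 / A := by
      rw [key, Complex.add_re, Complex.re_ofReal_mul, Complex.re_ofReal_mul, e1, e2, hA,
        ← Complex.normSq_eq_norm_sq]
      field_simp
      ring
    have h12 : ((1:ℂ)/2) = ((1/2 : ℝ) : ℂ) := by norm_num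
    rw [cohSt, norm_mul, norm_mul, norm_inv, norm_inv, Complex.norm_real,
      Real.norm_eq_abs, abs_of_nonneg (Real.rpow_nonneg (by positivity) _),
      Complex.norm_exp, hre,
      h12, Complex.norm_cpow_of_ne_zero hs0]
    simp [hc1]
  -- pointwise identity on x ≠ 0
  have hptwise : ∀ x : ℝ, x ≠ 0 →
      ‖(Real.sign x : ℂ) * cohSt hbar s sb q p (Real.sign q * |x|)
        - (Real.sign q : ℂ) * (cohSt hbar s sb q p x - cohSt hbar s sb q p (-x))‖
      = c1 * Real.exp (-(|x| + |q|)^2 / A) := by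
    intro x hx
    rcases hq.lt_or_gt with hq' | hq' <;> rcases hx.lt_or_gt with hx' | hx'
    · -- q < 0, x < 0
      rw [Real.sign_of_neg hq', Real.sign_of_neg hx', abs_of_neg hx']
      have e : ((-1:ℝ):ℂ) * cohSt hbar s sb q p (-1 * -x)
          - ((-1:ℝ):ℂ) * (cohSt hbar s sb q p x - cohSt hbar s sb q p (-x))
          = -(cohSt hbar s sb q p (-x)) := by
        rw [show (-1:ℝ) * -x = x by ring]; push_cast; ring
      rw [e, norm_neg, hnormψ, abs_of_neg hq']
      rw [show (-x - q)^2 = (-x + -q)^2 by ring]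
    · -- q < 0, x > 0
      rw [Real.sign_of_neg hq', Real.sign_of_pos hx', abs_of_pos hx']
      have e : ((1:ℝ):ℂ) * cohSt hbar s sb q p (-1 * x)
          - ((-1:ℝ):ℂ) * (cohSt hbar s sb q p x - cohSt hbar s sb q p (-x))
          = cohSt hbar s sb q p x := by
        rw [show (-1:ℝ) * x = -x by ring]; push_cast; ring
      rw [e, hnormψ, abs_of_neg hq']
      rw [show (x - q)^2 = (x + -q)^2 by ring]
    · -- q > 0, x < 0
      rw [Real.sign_of_pos hq', Real.sign_of_neg hx', abs_of_neg hx']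
      have e : ((-1:ℝ):ℂ) * cohSt hbar s sb q p (1 * -x)
          - ((1:ℝ):ℂ) * (cohSt hbar s sb q p x - cohSt hbar s sb q p (-x))
          = -(cohSt hbar s sb q p x) := by
        rw [show (1:ℝ) * -x = -x by ring]; push_cast; ring
      rw [e, norm_neg, hnormψ, abs_of_pos hq']
      rw [show (x - q)^2 = (-x + q)^2 by ring]
    · -- q > 0, x > 0
      rw [Real.sign_of_pos hq', Real.sign_of_pos hx', abs_of_pos hx']
      have e : ((1:ℝ):ℂ) * cohSt hbar s sb q p (1 * x)
          - ((1:ℝ):ℂ) * (cohSt hbar s sb q p x - cohSt hbar s sb q p (-x))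
          = cohSt hbar s sb q p (-x) := by
        rw [show (1:ℝ) * x = x by ring]; push_cast; ring
      rw [e, hnormψ, abs_of_pos hq']
      rw [show (-x - q)^2 = (x + q)^2 by ring]
  set E : ℝ := Real.exp (-(q^2) / A) with hE
  have hEpos : 0 < E := Real.exp_pos _
  set g : ℝ → ℝ := fun x => E * c1 * Real.exp (-(x^2) / A) with hg
  have hgpos : ∀ x, 0 < g x := fun x => by positivity
  -- a.e. bound
  have hae : ∀ᵐ x : ℝ ∂volume, x ≠ 0 := by
    rw [ae_iff]
    simpa using measure_singleton (0 : ℝ)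
  have hfg : ∀ᵐ x : ℝ ∂volume,
      ‖(Real.sign x : ℂ) * cohSt hbar s sb q p (Real.sign q * |x|)
        - (Real.sign q : ℂ) * (cohSt hbar s sb q p x - cohSt hbar s sb q p (-x))‖ ≤ ‖g x‖ := by
    filter_upwards [hae] with x hx
    rw [hptwise x hx, Real.norm_eq_abs, abs_of_pos (hgpos x), hg]
    have hsq : x^2 + q^2 ≤ (|x| + |q|)^2 := by
      have := abs_nonneg x
      have := abs_nonneg q
      nlinarith [sq_abs x, sq_abs q, mul_nonneg (abs_nonneg x) (abs_nonneg q)]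
    have : Real.exp (-(|x| + |q|)^2 / A) ≤ E * Real.exp (-(x^2) / A) := by
      rw [hE, ← Real.exp_add]
      apply Real.exp_le_exp.mpr
      rw [← add_div, div_le_div_iff_of_pos_right hApos]
      linarith
    calc c1 * Real.exp (-(|x| + |q|)^2 / A) ≤ c1 * (E * Real.exp (-(x^2) / A)) :=
          mul_le_mul_of_nonneg_left this hc1pos.le
      _ = E * c1 * Real.exp (-(x^2) / A) := by ring
  refine le_trans (eLpNorm_mono_ae hfg) ?_
  -- compute the L² norm of g
  have hgcont : Continuous g := by
    apply Continuous.mul continuous_const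
    exact Real.continuous_exp.comp (by continuity)
  have hgsq : (fun x => g x ^ 2) = fun x => (E * c1)^2 * Real.exp (-(2/A) * x^2) := by
    funext x
    rw [hg, mul_pow]
    congr 1
    rw [sq, ← Real.exp_add]
    congr 1
    field_simp
    ring
  have hgint2 : Integrable (fun x => g x ^ 2) volume := by
    rw [hgsq]
    exact (integrable_exp_neg_mul_sq (by positivity : (0:ℝ) < 2/A)).const_mul _
  have hmem : MemLp g 2 volume :=
    (memLp_two_iff_integrable_sq hgcont.aestronglyMeasurable).mpr hgint2
  rw [hmem.eLpNorm_eq_integral_rpow_norm two_ne_zero ENNReal.ofNat_ne_top]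
  have hint : ∫ x : ℝ, ‖g x‖ ^ (2:ℝ≥0∞).toReal ∂volume = E^2 := by
    have : ∀ x : ℝ, ‖g x‖ ^ (2:ℝ≥0∞).toReal = g x ^ 2 := by
      intro x
      rw [ENNReal.toReal_ofNat, Real.norm_eq_abs, Real.rpow_two, sq_abs]
    simp_rw [this, hgsq]
    rw [integral_const_mul, integral_gaussian]
    -- (E*c1)^2 * √(π/(2/A)) = E^2
    have hsqrt : Real.sqrt (Real.pi / (2/A)) = (2 * Real.pi * hbar) ^ ((1:ℝ)/2) * ‖s‖ := by
      have : Real.pi / (2/A) = (2 * Real.pi * hbar) * ‖s‖ ^ 2 := by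
        rw [hA]; field_simp; ring
      rw [this, Real.sqrt_mul h2ph.le, Real.sqrt_sq habs.le, Real.sqrt_eq_rpow]
    have ha : ((2 * Real.pi * hbar) ^ ((1:ℝ)/4))^2 = (2 * Real.pi * hbar) ^ ((1:ℝ)/2) := by
      rw [← Real.rpow_natCast ((2 * Real.pi * hbar) ^ ((1:ℝ)/4)) 2, ← Real.rpow_mul h2ph.le]
      norm_num
    have hb : (‖s‖ ^ ((1:ℝ)/2))^2 = ‖s‖ := by
      rw [← Real.rpow_natCast (‖s‖ ^ ((1:ℝ)/2)) 2, ← Real.rpow_mul habs.le]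
      norm_num
    have hc12 : c1^2 * ((2 * Real.pi * hbar) ^ ((1:ℝ)/2) * ‖s‖) = 1 := by
      rw [hc1, mul_pow, inv_pow, inv_pow, ha, hb]
      have h1 : (0:ℝ) < (2 * Real.pi * hbar) ^ ((1:ℝ)/2) := by positivity
      field_simp
    rw [hsqrt, mul_pow]
    calc E^2 * c1^2 * ((2 * Real.pi * hbar) ^ ((1:ℝ)/2) * ‖s‖)
        = E^2 * (c1^2 * ((2 * Real.pi * hbar) ^ ((1:ℝ)/2) * ‖s‖)) := by ring
      _ = E^2 := by rw [hc12, mul_one]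
  rw [hint]
  have : (E^2) ^ ((2:ℝ≥0∞).toReal)⁻¹ = E := by
    rw [ENNReal.toReal_ofNat, ← Real.rpow_natCast E 2, ← Real.rpow_mul hEpos.le]
    norm_num
  rw [this]
end
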